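/- Let x̃ᵢ = min{xᵢ, x*} for some x* ≥ 0 and let p̃ = Σ_{i : xᵢ ≥ x*} p̄ᵢ. Then the capacity curve of the truncated fleet satisfies: Ω_{p̄,x̃}(p) = Ω_{p̄,x}(p) for all p ≥ p̃, and Ω_{p̄,x̃}(p) = Ω_{p̄,x}(p̃) + (p̃ − p)·x* for all 0 ≤ p ≤ p̃. -/

import Mathlib

open MeasureTheory Set Finset

/-- The E-p transform of a signal `P`: the energy required above power rating `p`. -/
noncomputable def EpTransform (P : ℝ → ℝ) (p : ℝ) : ℝ :=
  ∫ t in Set.Ioi (0:ℝ), max (P t - p) 0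

/-- The worst-case reference signal `R_{p̄,x}(t) = Σᵢ p̄ᵢ·𝟙[0 ≤ t < xᵢ]`. -/
noncomputable def worstCase {n : ℕ} (pbar x : Fin n → ℝ) (t : ℝ) : ℝ :=
  ∑ i, if 0 ≤ t ∧ t < x i then pbar i else 0

/-- The discharging capacity curve `Ω_{p̄,x}`. -/
noncomputable def capacity {n : ℕ} (pbar x : Fin n → ℝ) (p : ℝ) : ℝ :=
  EpTransform (worstCase pbar x) p

lemma worstCase_measurable {n : ℕ} (pbar y : Fin n → ℝ) :
    Measurable (worstCase pbar y) := by
  unfold worstCase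
  apply Finset.measurable_sum
  intro i _
  have h : (fun t : ℝ => if 0 ≤ t ∧ t < y i then pbar i else 0)
      = Set.indicator (Set.Ico 0 (y i)) (fun _ => pbar i) := by
    ext t; simp [Set.indicator, Set.mem_Ico]
  rw [h]
  exact measurable_const.indicator measurableSet_Ico

lemma worstCase_nonneg {n : ℕ} (pbar y : Fin n → ℝ) (hp : ∀ i, 0 < pbar i) (t : ℝ) :
    0 ≤ worstCase pbar y t :=
  Finset.sum_nonneg fun i _ => by split <;> [exact (hp i).le; rfl]

lemma worstCase_le {n : ℕ} (pbar y : Fin n → ℝ) (hp : ∀ i, 0 < pbar i) (t : ℝ) :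
    worstCase pbar y t ≤ ∑ i, pbar i :=
  Finset.sum_le_sum fun i _ => by split <;> [rfl; exact (hp i).le]

/-- The capacity curve of the truncated fleet `x̃ᵢ = min{xᵢ, x*}` agrees with the original
capacity curve for `p ≥ p̃ = Σ_{i : xᵢ ≥ x*} p̄ᵢ`, and is affine with slope `-x*` below `p̃`. -/
theorem truncated_capacity {n : ℕ} (pbar x : Fin n → ℝ)
    (hp : ∀ i, 0 < pbar i) (hx : ∀ i, 0 ≤ x i)
    (xs : ℝ) (hxs : 0 ≤ xs) :
    (∀ p : ℝ, (∑ i ∈ Finset.univ.filter (fun i => xs ≤ x i), pbar i) ≤ p →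
        capacity pbar (fun i => min (x i) xs) p = capacity pbar x p) ∧
    (∀ p : ℝ, 0 ≤ p → p ≤ (∑ i ∈ Finset.univ.filter (fun i => xs ≤ x i), pbar i) →
        capacity pbar (fun i => min (x i) xs) p =
          capacity pbar x (∑ i ∈ Finset.univ.filter (fun i => xs ≤ x i), pbar i)
            + ((∑ i ∈ Finset.univ.filter (fun i => xs ≤ x i), pbar i) - p) * xs) := by
  classical
  set ptil := ∑ i ∈ Finset.univ.filter (fun i => xs ≤ x i), pbar i with hptil
  have hpt0 : 0 ≤ ptil := Finset.sum_nonneg fun i _ => (hp i).le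
  set R := worstCase pbar x with hR
  set Rt := worstCase pbar (fun i => min (x i) xs) with hRt
  -- fact 1
  have fact1 : ∀ t : ℝ, t < xs → Rt t = R t := by
    intro t htx
    unfold Rt R
    unfold worstCase
    apply Finset.sum_congr rfl
    intro i _
    simp [lt_min_iff, htx]
  -- fact 2
  have fact2 : ∀ t : ℝ, xs ≤ t → Rt t = 0 := by
    intro t ht
    unfold Rt; unfold worstCase
    apply Finset.sum_eq_zero
    intro i _
    exact if_neg fun h => absurd h.2 (not_lt.mpr ((min_le_right _ _).trans ht))
  -- sum as filter
  have hRfilter : ∀ t : ℝ, R t = ∑ i ∈ Finset.univ.filter (fun i => 0 ≤ t ∧ t < x i), pbar i := by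
    intro t
    unfold R; unfold worstCase
    rw [Finset.sum_filter]
  -- fact 3
  have fact3 : ∀ t : ℝ, xs ≤ t → R t ≤ ptil := by
    intro t ht
    rw [hRfilter t, hptil]
    apply Finset.sum_le_sum_of_subset_of_nonneg
    · intro i hi
      simp only [Finset.mem_filter, Finset.mem_univ, true_and] at hi ⊢
      exact ht.trans hi.2.le
    · intro i _ _; exact (hp i).le
  -- fact 4
  have fact4 : ∀ t : ℝ, 0 ≤ t → t < xs → ptil ≤ R t := by
    intro t ht htx
    rw [hRfilter t, hptil]
    apply Finset.sum_le_sum_of_subset_of_nonneg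
    · intro i hi
      simp only [Finset.mem_filter, Finset.mem_univ, true_and] at hi ⊢
      exact ⟨ht, htx.trans_le hi⟩
    · intro i _ _; exact (hp i).le
  constructor
  · -- part 1
    intro p hpge
    unfold capacity EpTransform
    apply setIntegral_congr_fun measurableSet_Ioi
    intro t ht
    simp only
    rcases lt_or_ge t xs with h | h
    · rw [← hRt, ← hR, fact1 t h]
    · rw [← hRt, ← hR, fact2 t h]
      rw [max_eq_right, max_eq_right]
      · linarith [fact3 t h]
      · linarith
  · -- part 2
    intro p hp0 hple
    unfold capacity EpTransform
    have hIoo : MeasurableSet (Set.Ioo (0:ℝ) xs) := measurableSet_Ioo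
    have hinter : Set.Ioi (0:ℝ) ∩ Set.Ioo 0 xs = Set.Ioo 0 xs :=
      Set.inter_eq_right.mpr Set.Ioo_subset_Ioi_self
    -- LHS
    have hLHS : (∫ t in Set.Ioi (0:ℝ), max (Rt t - p) 0)
        = ∫ t in Set.Ioo (0:ℝ) xs, (max (R t - ptil) 0 + (ptil - p)) := by
      rw [← hinter, ← setIntegral_indicator hIoo]
      apply setIntegral_congr_fun measurableSet_Ioi
      intro t ht
      simp only [Set.mem_Ioi] at ht
      beta_reduce
      rcases lt_or_ge t xs with h | h
      · rw [Set.indicator_of_mem (Set.mem_Ioo.mpr ⟨ht, h⟩)]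
        have h4 := fact4 t ht.le h
        rw [fact1 t h]
        rw [max_eq_left (by linarith : (0:ℝ) ≤ R t - p),
          max_eq_left (by linarith : (0:ℝ) ≤ R t - ptil)]
        ring
      · rw [Set.indicator_of_notMem (fun hm => absurd hm.2 (not_lt.mpr h))]
        rw [fact2 t h, max_eq_right (by linarith : (0:ℝ) - p ≤ 0)]
    have hRHS : (∫ t in Set.Ioi (0:ℝ), max (R t - ptil) 0)
        = ∫ t in Set.Ioo (0:ℝ) xs, max (R t - ptil) 0 := by
      rw [← hinter, ← setIntegral_indicator hIoo]
      apply setIntegral_congr_fun measurableSet_Ioi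
      intro t ht
      simp only [Set.mem_Ioi] at ht
      beta_reduce
      rcases lt_or_ge t xs with h | h
      · rw [Set.indicator_of_mem (Set.mem_Ioo.mpr ⟨ht, h⟩)]
      · rw [Set.indicator_of_notMem (fun hm => absurd hm.2 (not_lt.mpr h))]
        exact max_eq_right (by linarith [fact3 t h])
    rw [hLHS, hRHS]
    have hint : IntegrableOn (fun t => max (R t - ptil) 0) (Set.Ioo (0:ℝ) xs) := by
      apply Measure.integrableOn_of_bounded (M := ∑ i, pbar i) (measure_Ioo_lt_top.ne)
        (((worstCase_measurable pbar x).sub measurable_const).max measurable_const).aestronglyMeasurable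
      filter_upwards with t
      rw [Real.norm_eq_abs, abs_of_nonneg (le_max_right _ _)]
      have := worstCase_le pbar x hp t
      have := worstCase_nonneg pbar x hp t
      rw [max_le_iff]
      constructor
      · show worstCase pbar x t - ptil ≤ _; linarith [Finset.sum_nonneg (fun i (_ : i ∈ Finset.univ) => (hp i).le)]
      · exact Finset.sum_nonneg fun i _ => (hp i).le
    rw [integral_add hint (integrableOn_const measure_Ioo_lt_top.ne),
      setIntegral_const, Real.volume_real_Ioo_of_le hxs, smul_eq_mul]
    ring
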